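/- The set of convergent sequences in G is negligible for the infinite product of Haar measures: the set of sequences x : ℕ → G for which there exists L ∈ G with x(n) → L as n → ∞ is contained in a measurable set of measure zero with respect to the product measure on G^ℕ given by an independent copy of the Haar probability measure at each index. -/

import Mathlib

open MeasureTheory
open scoped ENNReal

/-- The set of convergent sequences in `G` is negligible for the infinite
product of Haar measures: if `G` is a compact Hausdorff second countable
topological group with more than one element, `μ₀` its normalized Haar
probability measure, and `ν` the infinite product measure on `G^ℕ` (an
independent copy of `μ₀` at each index, characterized by its values on cylinder
sets), then the set of sequences `x : ℕ → G` for which there exists `L ∈ G`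
with `x n → L` is contained in a measurable set of `ν`-measure zero. -/
theorem convergent_sequences_contained_in_null {G : Type*} [Group G]
    [TopologicalSpace G] [IsTopologicalGroup G] [CompactSpace G] [T2Space G]
    [SecondCountableTopology G] [Nontrivial G] [MeasurableSpace G] [BorelSpace G]
    (μ₀ : Measure G) [μ₀.IsHaarMeasure] [IsProbabilityMeasure μ₀]
    (ν : Measure (ℕ → G))
    (hν : ∀ (s : Finset ℕ) (B : ℕ → Set G),
      (∀ i ∈ s, MeasurableSet (B i)) →
      ν {x : ℕ → G | ∀ i ∈ s, x i ∈ B i} = ∏ i ∈ s, μ₀ (B i)) :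
    ∃ N : Set (ℕ → G), MeasurableSet N ∧ ν N = 0 ∧
      {x : ℕ → G | ∃ L : G, Filter.Tendsto x Filter.atTop (nhds L)} ⊆ N := by
  -- singletons have measure < 1
  have hsing : ∀ g : G, μ₀ {g} < 1 := by
    intro g
    have hinv : ∀ a : G, μ₀ {a} = μ₀ {(1 : G)} := by
      intro a
      have : (a * ·) ⁻¹' {a} = {(1 : G)} := by
        ext z; simp [Set.mem_preimage]
      rw [← this, measure_preimage_mul]
    rw [hinv g]
    by_contra h
    push_neg at h
    obtain ⟨a, ha⟩ := exists_ne (1 : G)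
    have hdisj : Disjoint ({(1:G)} : Set G) {a} := by
      simp [Set.disjoint_singleton, ha.symm]
    have hle : μ₀ ({(1:G)} ∪ {a}) ≤ 1 := by
      simpa using measure_mono (Set.subset_univ _) |>.trans_eq (measure_univ (μ := μ₀))
    rw [measure_union hdisj (measurableSet_singleton a), hinv a] at hle
    have : (2 : ℝ≥0∞) ≤ 1 := by
      calc (2 : ℝ≥0∞) = 1 + 1 := by norm_num
      _ ≤ μ₀ {(1:G)} + μ₀ {(1:G)} := add_le_add h h
      _ ≤ 1 := hle
    norm_num at this
  -- for each g, choose an open neighborhood of measure < 1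
  have hU : ∀ g : G, ∃ U : Set G, g ∈ U ∧ IsOpen U ∧ μ₀ U < 1 := by
    intro g
    obtain ⟨U, hsub, hopen, hlt⟩ := Set.exists_isOpen_lt_of_lt ({g} : Set G) 1 (hsing g)
    exact ⟨U, hsub rfl, hopen, hlt⟩
  choose U hgU hUopen hUlt using hU
  -- finite subcover
  obtain ⟨t, ht⟩ := IsCompact.elim_finite_subcover isCompact_univ U hUopen
    (fun g _ => Set.mem_iUnion.2 ⟨g, hgU g⟩)
  -- the null set
  refine ⟨⋃ g ∈ t, ⋃ N : ℕ, {x : ℕ → G | ∀ n ≥ N, x n ∈ U g}, ?_, ?_, ?_⟩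
  · refine MeasurableSet.biUnion t.countable_toSet fun g _ => MeasurableSet.iUnion fun N => ?_
    have : {x : ℕ → G | ∀ n ≥ N, x n ∈ U g} = ⋂ n, ⋂ (_ : N ≤ n), (fun x => x n) ⁻¹' U g := by
      ext x; simp [Set.mem_iInter]
    rw [this]
    exact MeasurableSet.iInter fun n => MeasurableSet.iInter fun _ =>
      (measurable_pi_apply n) ((hUopen g).measurableSet)
  · refine measure_biUnion_null_iff t.countable_toSet |>.2 fun g _ => ?_
    refine measure_iUnion_null fun N => ?_
    -- the tail set has measure ≤ (μ₀ (U g))^(k+1) for all k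
    have key : ∀ k : ℕ, ν {x : ℕ → G | ∀ n ≥ N, x n ∈ U g} ≤ (μ₀ (U g)) ^ (k + 1) := by
      intro k
      have hsub : {x : ℕ → G | ∀ n ≥ N, x n ∈ U g}
          ⊆ {x : ℕ → G | ∀ i ∈ Finset.Icc N (N + k), x i ∈ U g} := by
        intro x hx i hi
        exact hx i (Finset.mem_Icc.1 hi).1
      refine (measure_mono hsub).trans_eq ?_
      rw [hν (Finset.Icc N (N + k)) (fun _ => U g) (fun i _ => (hUopen g).measurableSet)]
      rw [Finset.prod_const, Nat.card_Icc]
      congr 1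
      omega
    have h0 : Filter.Tendsto (fun k : ℕ => (μ₀ (U g)) ^ (k + 1)) Filter.atTop (nhds 0) := by
      exact (ENNReal.tendsto_pow_atTop_nhds_zero_of_lt_one (hUlt g)).comp
        (Filter.tendsto_add_atTop_nat 1)
    have := ge_of_tendsto' h0 key
    exact le_antisymm this zero_le
  · rintro x ⟨L, hL⟩
    have : L ∈ ⋃ g ∈ t, U g := ht (Set.mem_univ L)
    obtain ⟨g, hg, hLg⟩ := by simpa using this
    have : ∀ᶠ n in Filter.atTop, x n ∈ U g := hL ((hUopen g).mem_nhds hLg)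
    obtain ⟨N, hN⟩ := Filter.eventually_atTop.1 this
    exact Set.mem_biUnion hg (Set.mem_iUnion.2 ⟨N, hN⟩)
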